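/- Let R be a unital associative algebra over a field F, let q ∈ F with q ≠ 0, and let A, B ∈ R satisfy A·B − q·B·A = 1. Suppose q^p = 1 and {p}_q = 0 for some positive integer p. Then B^p commutes with A, i.e., B^p·A = A·B^p. -/

import Mathlib

theorem Bpow_p_comm_A {F : Type*} [Field F] {R : Type*} [Ring R] [Algebra F R]
    (q : F) (hq0 : q ≠ 0) (A B : R) (h : A * B - q • (B * A) = 1)
    (p : ℕ) (hp : 0 < p) (hqp : q ^ p = 1)
    (hsum : (∑ i ∈ Finset.range p, q ^ i) = 0) :
    B ^ p * A = A * B ^ p := by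
  have hAB : A * B = q • (B * A) + 1 := by linear_combination (norm := module) h
  have key : ∀ n : ℕ, A * B ^ (n + 1) =
      q ^ (n + 1) • (B ^ (n + 1) * A) + (∑ i ∈ Finset.range (n + 1), q ^ i) • B ^ n := by
    intro n
    induction n with
    | zero => simp [hAB]
    | succ n ih =>
      have step : A * B ^ (n + 2) = (A * B ^ (n + 1)) * B := by
        rw [pow_succ, mul_assoc]
      have hBA : (B ^ (n + 1) * A) * B = B ^ (n + 1) * (q • (B * A) + 1) := by
        rw [mul_assoc, hAB]
      rw [step, ih, add_mul, smul_mul_assoc, smul_mul_assoc, hBA, geom_sum_succ]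
      simp only [mul_add, mul_one, mul_smul_comm, smul_smul, pow_succ, mul_assoc]
      rw [Finset.sum_range_succ (f := fun i => q ^ i) (n := n + 1)]
      match_scalars <;> (try rw [geom_sum_succ]) <;> ring
  obtain ⟨n, rfl⟩ := Nat.exists_eq_add_of_lt hp
  simp only [zero_add] at *
  have := key n
  rw [hsum, hqp, one_smul, zero_smul, add_zero] at this
  exact this.symm
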